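/- arXiv:2401.10346 — 2 statements merged into one kernel-verified Lean document; each statement's English description precedes it below -/
import Mathlib

section
/- Let X₀ be an n1×n2 matrix (n2 ≥ n1) of rank r. (i) If Φ: ℝ^{n1×n2} → ℝ^m is a linear operator such that X₀ is the unique optimal solution of min ‖X‖_* subject to ΦX = ΦX₀, then m ≥ r(r+1)/2. (ii) There exists a linear operator Φ: ℝ^{n1×n2} → ℝ^{r(r+1)/2} such that X₀ is the unique optimal solution of min ‖X‖_* subject to ΦX = ΦX₀. -/
open Matrix Filter Set

/-- The singular values of a rectangular real matrix, in decreasing order: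
the square roots of the eigenvalues of `X Xᵀ`, sorted decreasingly. -/
noncomputable def svals {a b : ℕ} (X : Matrix (Fin a) (Fin b) ℝ) : Fin a → ℝ :=
  fun i =>
    Real.sqrt ((Matrix.isHermitian_mul_conjTranspose_self X).eigenvalues
      (Tuple.sort (Matrix.isHermitian_mul_conjTranspose_self X).eigenvalues i.rev))

/-- The nuclear norm `‖X‖_* = Σᵢ σᵢ(X)`. -/
noncomputable def nuclearNorm {a b : ℕ} (X : Matrix (Fin a) (Fin b) ℝ) : ℝ :=
  ∑ i, svals X i

/-- The spectral norm `‖X‖ = σ₁(X)`. -/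
noncomputable def matSpectralNorm {a b : ℕ} (X : Matrix (Fin a) (Fin b) ℝ) : ℝ :=
  ⨆ i, svals X i

/-- The Frobenius (trace) inner product `⟨A, B⟩ = Tr(Aᵀ B)`. -/
noncomputable def finner {a b : ℕ} (A B : Matrix (Fin a) (Fin b) ℝ) : ℝ :=
  Matrix.trace (Aᵀ * B)

/-- The Frobenius norm. -/
noncomputable def frobNorm {a b : ℕ} (A : Matrix (Fin a) (Fin b) ℝ) : ℝ :=
  Real.sqrt (finner A A)

/-- The subdifferential of the nuclear norm at `X`. -/
def nsubdiff {a b : ℕ} (X : Matrix (Fin a) (Fin b) ℝ) : Set (Matrix (Fin a) (Fin b) ℝ) :=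
  {Y | ∀ Z, finner Y (Z - X) ≤ nuclearNorm Z - nuclearNorm X}

/-- `∂g*(Y) = {X : Y ∈ ∂‖X‖_*}`, the subdifferential of the conjugate of the nuclear norm. -/
def invSubdiff {a b : ℕ} (Y : Matrix (Fin a) (Fin b) ℝ) : Set (Matrix (Fin a) (Fin b) ℝ) :=
  {X | Y ∈ nsubdiff X}

/-- `O(X)`: the set of orthogonal pairs `(U, V)` such that `X = U (Diag σ(X)) Vᵀ`
is a full ordered SVD of `X`. -/
def svdPairs {a b : ℕ} (X : Matrix (Fin a) (Fin b) ℝ) :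
    Set (Matrix (Fin a) (Fin a) ℝ × Matrix (Fin b) (Fin b) ℝ) :=
  {UV | UV.1ᵀ * UV.1 = 1 ∧ UV.2ᵀ * UV.2 = 1 ∧
    X = UV.1 * (Matrix.of fun (i : Fin a) (j : Fin b) =>
      if (i : ℕ) = (j : ℕ) then svals X i else 0) * UV.2ᵀ}

/-- `p(Y) = #{i : σᵢ(Y) = 1}`. -/
noncomputable def pOne {a b : ℕ} (Y : Matrix (Fin a) (Fin b) ℝ) : ℕ :=
  Nat.card {i : Fin a // svals Y i = 1}

/-- The radial cone `R_Ω(x) = ℝ₊ (Ω − x)` of a set `Ω` at a point `x`. -/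
def radialCone {M : Type*} [AddCommGroup M] [Module ℝ M] (Ω : Set M) (x : M) : Set M :=
  {w | ∃ t : ℝ, 0 ≤ t ∧ ∃ z ∈ Ω, w = t • (z - x)}

/-- The `n1 × n2` block matrix `[A, D, 0; Dᵀ, C, 0; 0, 0, 0]`, where `A` occupies the
top-left `r × r` block, `D` the adjacent `r × (p − r)` block, `C` the next
`(p − r) × (p − r)` diagonal block, with zeros elsewhere. -/
def blockRect (n1 n2 r p : ℕ) (A : Matrix (Fin r) (Fin r) ℝ)
    (D : Matrix (Fin r) (Fin (p - r)) ℝ) (C : Matrix (Fin (p - r)) (Fin (p - r)) ℝ) :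
    Matrix (Fin n1) (Fin n2) ℝ :=
  Matrix.of fun i j =>
    if hi : (i : ℕ) < r then
      if hj : (j : ℕ) < r then A ⟨i, hi⟩ ⟨j, hj⟩
      else if hj2 : (j : ℕ) < p then D ⟨i, hi⟩ ⟨(j : ℕ) - r, by omega⟩
      else 0
    else if hi2 : (i : ℕ) < p then
      if hj : (j : ℕ) < r then D ⟨j, hj⟩ ⟨(i : ℕ) - r, by omega⟩
      else if hj2 : (j : ℕ) < p then C ⟨(i : ℕ) - r, by omega⟩ ⟨(j : ℕ) - r, by omega⟩
      else 0
    else 0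


namespace MMB
open Polynomial

variable {n n1 n2 : ℕ}

lemma nuclearNorm_eq (X : Matrix (Fin n1) (Fin n2) ℝ) :
    nuclearNorm X = ∑ i, Real.sqrt ((Matrix.isHermitian_mul_conjTranspose_self X).eigenvalues i) := by
  unfold nuclearNorm svals
  exact Equiv.sum_comp (Fin.revPerm.trans
    (Tuple.sort (Matrix.isHermitian_mul_conjTranspose_self X).eigenvalues))
    (fun i => Real.sqrt ((Matrix.isHermitian_mul_conjTranspose_self X).eigenvalues i))

lemma charpoly_orth_conj {U M : Matrix (Fin n) (Fin n) ℝ} (hU : U * Uᵀ = 1) :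
    (U * M * Uᵀ).charpoly = M.charpoly := by
  classical
  set f : Matrix (Fin n) (Fin n) ℝ →+* Matrix (Fin n) (Fin n) ℝ[X] := (C : ℝ →+* ℝ[X]).mapMatrix with hf
  have hfU : f U * f Uᵀ = 1 := by rw [← _root_.map_mul, hU, _root_.map_one]
  have hscal : Matrix.scalar (Fin n) (X : ℝ[X]) = (X : ℝ[X]) • (1 : Matrix (Fin n) (Fin n) ℝ[X]) := by
    ext i j
    by_cases h : i = j <;> simp [h, Matrix.one_apply, Matrix.diagonal_apply]
  have hcm : charmatrix (U * M * Uᵀ) = f U * charmatrix M * f Uᵀ := by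
    unfold charmatrix
    rw [show C.mapMatrix (U * M * Uᵀ) = f U * C.mapMatrix M * f Uᵀ by rw [← hf, ← _root_.map_mul, ← _root_.map_mul], mul_sub, sub_mul, hscal]
    congr 1
    rw [mul_smul_comm, smul_mul_assoc, mul_one, hfU]
  rw [Matrix.charpoly, Matrix.charpoly, hcm, Matrix.det_mul, Matrix.det_mul, mul_right_comm]
  have h1 : (f U).det * (f Uᵀ).det = 1 := by rw [← Matrix.det_mul, hfU, Matrix.det_one]
  rw [h1, one_mul]

lemma spectral_real {A : Matrix (Fin n) (Fin n) ℝ} (hA : A.IsHermitian) :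
    ∃ V : Matrix (Fin n) (Fin n) ℝ, V * Vᵀ = 1 ∧ Vᵀ * V = 1 ∧
      A = V * Matrix.diagonal hA.eigenvalues * Vᵀ := by
  refine ⟨hA.eigenvectorUnitary, ?_, ?_, ?_⟩
  · have := Matrix.mem_unitaryGroup_iff.mp hA.eigenvectorUnitary.2
    simpa [Matrix.star_eq_conjTranspose, Matrix.conjTranspose_eq_transpose_of_trivial] using this
  · have := Matrix.mem_unitaryGroup_iff'.mp hA.eigenvectorUnitary.2
    simpa [Matrix.star_eq_conjTranspose, Matrix.conjTranspose_eq_transpose_of_trivial] using this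
  · have := hA.spectral_theorem
    simpa [RCLike.ofReal_real_eq_id, Matrix.star_eq_conjTranspose,
      Matrix.conjTranspose_eq_transpose_of_trivial] using this

lemma charpoly_diagonal (d : Fin n → ℝ) :
    (Matrix.diagonal d).charpoly
      = (Multiset.map (fun a => X - C a) (Finset.univ.val.map d)).prod := by
  classical
  have h : charmatrix (Matrix.diagonal d)
      = Matrix.diagonal (fun i => (X : ℝ[X]) - C (d i)) := by
    ext i j
    by_cases h : i = j <;> simp [h, Matrix.diagonal_apply_ne]
  rw [Matrix.charpoly, h, Matrix.det_diagonal, Finset.prod_eq_multiset_prod, Multiset.map_map]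
  rfl

lemma charpoly_hermitian {A : Matrix (Fin n) (Fin n) ℝ} (hA : A.IsHermitian) :
    A.charpoly = (Multiset.map (fun a => X - C a) (Finset.univ.val.map hA.eigenvalues)).prod := by
  obtain ⟨V, hV1, _, hsp⟩ := spectral_real hA
  conv_lhs => rw [hsp]
  rw [charpoly_orth_conj hV1, charpoly_diagonal]

lemma eig_multiset {A : Matrix (Fin n) (Fin n) ℝ} (hA : A.IsHermitian) {w : Fin n → ℝ}
    (hw : A.charpoly = (Multiset.map (fun a => X - C a) (Finset.univ.val.map w)).prod) :
    Finset.univ.val.map hA.eigenvalues = Finset.univ.val.map w := by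
  have h1 := (charpoly_hermitian hA).symm.trans hw
  have h2 := congrArg Polynomial.roots h1
  rwa [roots_multiset_prod_X_sub_C, roots_multiset_prod_X_sub_C] at h2

lemma sum_eig_eq {A : Matrix (Fin n) (Fin n) ℝ} (hA : A.IsHermitian) {w : Fin n → ℝ}
    (hw : A.charpoly = (Multiset.map (fun a => X - C a) (Finset.univ.val.map w)).prod)
    (f : ℝ → ℝ) :
    ∑ i, f (hA.eigenvalues i) = ∑ i, f (w i) := by
  have h := eig_multiset hA hw
  rw [Finset.sum_eq_multiset_sum, Finset.sum_eq_multiset_sum]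
  have h1 : Multiset.map (fun i => f (hA.eigenvalues i)) Finset.univ.val
      = Multiset.map f (Multiset.map hA.eigenvalues Finset.univ.val) := by
    rw [Multiset.map_map]; rfl
  have h2 : Multiset.map (fun i => f (w i)) Finset.univ.val
      = Multiset.map f (Multiset.map w Finset.univ.val) := by
    rw [Multiset.map_map]; rfl
  rw [h1, h2, h]


def Jmat (n1 n2 : ℕ) : Matrix (Fin n1) (Fin n2) ℝ :=
  Matrix.of fun i j => if (i : ℕ) = (j : ℕ) then 1 else 0

lemma Jmat_mul_transpose (hn : n1 ≤ n2) : Jmat n1 n2 * (Jmat n1 n2)ᵀ = 1 := by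
  ext i k
  simp only [Matrix.mul_apply, Jmat, Matrix.transpose_apply, Matrix.of_apply]
  rw [Finset.sum_eq_single (Fin.castLE hn i)]
  · simp only [Fin.coe_castLE, Matrix.one_apply]
    by_cases h : i = k
    · simp [h]
    · have : (k : ℕ) ≠ (i : ℕ) := fun hc => h (Fin.ext hc).symm
      simp [h, this]
  · intro b _ hb
    have : (i : ℕ) ≠ (b : ℕ) := by
      intro hc
      exact hb (Fin.ext (by simp [← hc]))
    simp [this]
  · simp

lemma gram_conj (U : Matrix (Fin n1) (Fin n1) ℝ) (X : Matrix (Fin n1) (Fin n2) ℝ)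
    (V : Matrix (Fin n2) (Fin n2) ℝ) (hV : Vᵀ * V = 1) :
    (U * X * Vᵀ) * (U * X * Vᵀ)ᴴ = U * (X * Xᴴ) * Uᵀ := by
  rw [Matrix.conjTranspose_eq_transpose_of_trivial, Matrix.conjTranspose_eq_transpose_of_trivial,
    Matrix.transpose_mul, Matrix.transpose_mul, Matrix.transpose_transpose]
  calc U * X * Vᵀ * (V * (Xᵀ * Uᵀ)) = U * X * ((Vᵀ * V) * (Xᵀ * Uᵀ)) := by
        rw [Matrix.mul_assoc (U * X), ← Matrix.mul_assoc Vᵀ]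
    _ = U * (X * Xᵀ) * Uᵀ := by rw [hV, Matrix.one_mul, ← Matrix.mul_assoc, ← Matrix.mul_assoc]

lemma nuclearNorm_conj {U : Matrix (Fin n1) (Fin n1) ℝ} {V : Matrix (Fin n2) (Fin n2) ℝ}
    (X : Matrix (Fin n1) (Fin n2) ℝ) (hU : Uᵀ * U = 1) (hV : Vᵀ * V = 1) :
    nuclearNorm (U * X * Vᵀ) = nuclearNorm X := by
  rw [nuclearNorm_eq, nuclearNorm_eq]
  have h1 : ((U * X * Vᵀ) * (U * X * Vᵀ)ᴴ).charpoly = (X * Xᴴ).charpoly := by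
    rw [gram_conj U X V hV, charpoly_orth_conj (mul_eq_one_comm.mp hU)]
  exact sum_eig_eq _ (h1.trans (charpoly_hermitian (Matrix.isHermitian_mul_conjTranspose_self X)))
    Real.sqrt

lemma nuclearNorm_psd_mul_J (hn : n1 ≤ n2) {M : Matrix (Fin n1) (Fin n1) ℝ}
    (hM : M.PosSemidef) : nuclearNorm (M * Jmat n1 n2) = M.trace := by
  have hHerm : M.IsHermitian := hM.1
  have hMt : Mᵀ = M := by
    rw [← Matrix.conjTranspose_eq_transpose_of_trivial]; exact hHerm
  have hg : (M * Jmat n1 n2) * (M * Jmat n1 n2)ᴴ = M * M := by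
    rw [Matrix.conjTranspose_eq_transpose_of_trivial, Matrix.transpose_mul,
      Matrix.mul_assoc, ← Matrix.mul_assoc (Jmat n1 n2), Jmat_mul_transpose hn, one_mul, hMt]
  obtain ⟨V, hV1, hV2, hsp⟩ := spectral_real hHerm
  have hMM : M * M = V * Matrix.diagonal (fun i => hHerm.eigenvalues i * hHerm.eigenvalues i) * Vᵀ := by
    conv_lhs => rw [hsp]
    simp only [Matrix.mul_assoc]
    rw [← Matrix.mul_assoc Vᵀ V, hV2, Matrix.one_mul,
      ← Matrix.mul_assoc (Matrix.diagonal hHerm.eigenvalues) (Matrix.diagonal hHerm.eigenvalues) Vᵀ,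
      Matrix.diagonal_mul_diagonal]
  have hchar : ((M * Jmat n1 n2) * (M * Jmat n1 n2)ᴴ).charpoly
      = (Multiset.map (fun a => X - C a)
          (Finset.univ.val.map (fun i => hHerm.eigenvalues i * hHerm.eigenvalues i))).prod := by
    rw [hg, hMM, charpoly_orth_conj hV1, charpoly_diagonal]
  rw [nuclearNorm_eq, sum_eig_eq _ hchar Real.sqrt]
  have hs : ∀ i ∈ Finset.univ, Real.sqrt (hHerm.eigenvalues i * hHerm.eigenvalues i)
      = hHerm.eigenvalues i := fun i _ => Real.sqrt_mul_self (hM.eigenvalues_nonneg i)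
  rw [Finset.sum_congr rfl hs]
  conv_rhs => rw [hsp]
  rw [Matrix.trace_mul_cycle, hV2, Matrix.one_mul, Matrix.trace_diagonal]

lemma inner_eq_dot {k : ℕ} (x y : EuclideanSpace ℝ (Fin k)) :
    (inner ℝ x y : ℝ) = (x : Fin k → ℝ) ⬝ᵥ (y : Fin k → ℝ) := by
  simp [PiLp.inner_apply, dotProduct, RCLike.inner_apply, mul_comm]

lemma col_orth {k : ℕ} (b : OrthonormalBasis (Fin k) ℝ (EuclideanSpace ℝ (Fin k))) :
    (Matrix.of fun i j => (b j : EuclideanSpace ℝ (Fin k)) i)ᵀ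
      * (Matrix.of fun i j => (b j : EuclideanSpace ℝ (Fin k)) i) = 1 := by
  classical
  ext i j
  simp only [Matrix.mul_apply, Matrix.transpose_apply, Matrix.of_apply, Matrix.one_apply]
  have h := orthonormal_iff_ite.mp b.orthonormal i j
  rw [inner_eq_dot] at h
  simpa [dotProduct] using h

lemma exists_svd (hn : n1 ≤ n2) (Y : Matrix (Fin n1) (Fin n2) ℝ) :
    ∃ (U : Matrix (Fin n1) (Fin n1) ℝ) (V : Matrix (Fin n2) (Fin n2) ℝ) (d : Fin n1 → ℝ),
      Uᵀ * U = 1 ∧ Vᵀ * V = 1 ∧ (∀ i, 0 ≤ d i) ∧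
      Y = U * (Matrix.diagonal d * Jmat n1 n2) * Vᵀ := by
  classical
  have hG : (Y * Yᴴ).IsHermitian := Matrix.isHermitian_mul_conjTranspose_self Y
  have hpsd : (Y * Yᴴ).PosSemidef := Matrix.posSemidef_self_mul_conjTranspose Y
  set lam := hG.eigenvalues with hlam
  have hlam0 : ∀ i, 0 ≤ lam i := hpsd.eigenvalues_nonneg
  set u := hG.eigenvectorBasis with hu
  set U : Matrix (Fin n1) (Fin n1) ℝ := Matrix.of (fun p i => (u i : EuclideanSpace ℝ (Fin n1)) p) with hUdef
  have hU : Uᵀ * U = 1 := col_orth u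
  set w : Fin n1 → (Fin n2 → ℝ) := fun i => Yᵀ *ᵥ (u i : Fin n1 → ℝ) with hw
  have hww : ∀ i j, w i ⬝ᵥ w j = lam j * (if i = j then 1 else 0) := by
    intro i j
    have h1 : w i ⬝ᵥ w j = (w i ᵥ* Yᵀ) ⬝ᵥ (u j : Fin n1 → ℝ) := by
      rw [hw]; exact Matrix.dotProduct_mulVec _ _ _
    have h2 : w i ᵥ* Yᵀ = (Y * Yᵀ) *ᵥ (u i : Fin n1 → ℝ) := by
      rw [Matrix.vecMul_transpose, hw, Matrix.mulVec_mulVec]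
    have h3 : (Y * Yᵀ) *ᵥ (u i : Fin n1 → ℝ) = lam i • (u i : Fin n1 → ℝ) := by
      rw [show Yᵀ = Yᴴ from (Matrix.conjTranspose_eq_transpose_of_trivial Y).symm]
      exact hG.mulVec_eigenvectorBasis i
    rw [h1, h2, h3, smul_dotProduct]
    have h4 : ((u i : Fin n1 → ℝ) ⬝ᵥ (u j : Fin n1 → ℝ)) = if i = j then 1 else 0 := by
      have h := orthonormal_iff_ite.mp u.orthonormal i j
      rw [inner_eq_dot] at h
      exact h
    rw [h4]
    by_cases h : i = j <;> simp [h, mul_comm]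
  have hw0 : ∀ i, lam i = 0 → w i = 0 := by
    intro i h0
    have := hww i i
    rw [h0] at this
    simp only [if_pos rfl, zero_mul] at this
    exact dotProduct_self_eq_zero.mp this
  set s : Set (Fin n2) := {j | ∃ hj : (j : ℕ) < n1, lam ⟨(j : ℕ), hj⟩ ≠ 0} with hs
  set v : Fin n2 → EuclideanSpace ℝ (Fin n2) := fun j =>
    if hj : (j : ℕ) < n1 then (Real.sqrt (lam ⟨(j : ℕ), hj⟩))⁻¹ • (WithLp.toLp 2 (w ⟨(j : ℕ), hj⟩) : EuclideanSpace ℝ (Fin n2)) else 0 with hv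
  have hvv : ∀ i i' : Fin n1, lam i ≠ 0 → lam i' ≠ 0 →
      ((Real.sqrt (lam i))⁻¹ • w i) ⬝ᵥ ((Real.sqrt (lam i'))⁻¹ • w i')
        = if i = i' then (1:ℝ) else 0 := by
    intro i i' h h'
    rw [smul_dotProduct, dotProduct_smul, hww]
    by_cases hii : i = i'
    · subst hii
      rw [if_pos rfl]
      have hsq : Real.sqrt (lam i) * Real.sqrt (lam i) = lam i := Real.mul_self_sqrt (hlam0 i)
      have hrw : (Real.sqrt (lam i))⁻¹ • (Real.sqrt (lam i))⁻¹ • (lam i * 1)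
          = lam i / (Real.sqrt (lam i) * Real.sqrt (lam i)) := by
        simp only [smul_eq_mul]; ring
      rw [hrw, hsq, div_self h]
    · rw [if_neg hii]
      simp
  have horth : Orthonormal ℝ (s.restrict v) := by
    rw [orthonormal_iff_ite]
    rintro ⟨j, hjn, hjl⟩ ⟨j', hjn', hjl'⟩
    show inner ℝ (v j) (v j') = _
    rw [inner_eq_dot]
    have hvj : v j = (Real.sqrt (lam ⟨(j : ℕ), hjn⟩))⁻¹ • (WithLp.toLp 2 (w ⟨(j : ℕ), hjn⟩) : EuclideanSpace ℝ (Fin n2)) := by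
      rw [hv]; exact dif_pos hjn
    have hvj' : v j' = (Real.sqrt (lam ⟨(j' : ℕ), hjn'⟩))⁻¹ • (WithLp.toLp 2 (w ⟨(j' : ℕ), hjn'⟩) : EuclideanSpace ℝ (Fin n2)) := by
      rw [hv]; exact dif_pos hjn'
    rw [hvj, hvj']
    have hiff : ((⟨(j : ℕ), hjn⟩ : Fin n1) = ⟨(j' : ℕ), hjn'⟩)
        ↔ ((⟨j, ⟨hjn, hjl⟩⟩ : s) = ⟨j', ⟨hjn', hjl'⟩⟩) := by
      constructor
      · intro h
        exact Subtype.ext (Fin.ext (congrArg (fun x : Fin n1 => (x : ℕ)) h))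
      · intro h
        exact Fin.ext (congrArg (fun (x : s) => ((x : Fin n2) : ℕ)) h)
    exact (hvv _ _ hjl hjl').trans (if_congr hiff rfl rfl)
  have hcard : Module.finrank ℝ (EuclideanSpace ℝ (Fin n2)) = Fintype.card (Fin n2) := by
    rw [finrank_euclideanSpace_fin, Fintype.card_fin]
  obtain ⟨b, hb⟩ := horth.exists_orthonormalBasis_extension_of_card_eq hcard
  set V : Matrix (Fin n2) (Fin n2) ℝ := Matrix.of (fun p j => (b j : EuclideanSpace ℝ (Fin n2)) p) with hVdef
  have hV : Vᵀ * V = 1 := col_orth b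
  set d : Fin n1 → ℝ := fun i => Real.sqrt (lam i) with hd
  refine ⟨U, V, d, hU, hV, fun i => Real.sqrt_nonneg _, ?_⟩
  have hUU : U * Uᵀ = 1 := mul_eq_one_comm.mp hU
  have hwv : ∀ i, w i = fun j => d i * (b (Fin.castLE hn i) : EuclideanSpace ℝ (Fin n2)) j := by
    intro i
    by_cases h0 : lam i = 0
    · funext j
      rw [hw0 i h0, hd]
      simp [h0]
    · have hmem : Fin.castLE hn i ∈ s := by
        refine ⟨by simpa using i.isLt, ?_⟩
        have : (⟨((Fin.castLE hn i) : ℕ), by simpa using i.isLt⟩ : Fin n1) = i := Fin.ext (by simp)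
        rw [this]; exact h0
      have hbv := hb _ hmem
      funext j
      rw [hbv, hv]
      have hlt : ((Fin.castLE hn i : Fin n2) : ℕ) < n1 := by simpa using i.isLt
      simp only [dif_pos hlt]
      have hidx : (⟨((Fin.castLE hn i) : ℕ), hlt⟩ : Fin n1) = i := Fin.ext (by simp)
      rw [hidx]
      have hne : Real.sqrt (lam i) ≠ 0 := by
        have : 0 < lam i := lt_of_le_of_ne (hlam0 i) (Ne.symm h0)
        positivity
      show w i j = d i * ((Real.sqrt (lam i))⁻¹ • w i) j
      rw [hd]
      simp only [Pi.smul_apply, smul_eq_mul]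
      field_simp
  have key : Uᵀ * Y = Matrix.diagonal d * Jmat n1 n2 * Vᵀ := by
    ext i j
    have hL : (Uᵀ * Y) i j = w i j := by
      simp only [Matrix.mul_apply, Matrix.transpose_apply, hUdef, Matrix.of_apply, hw,
        Matrix.mulVec, dotProduct, Matrix.transpose_apply]
      exact Finset.sum_congr rfl fun k _ => mul_comm _ _
    have hR : (Matrix.diagonal d * Jmat n1 n2 * Vᵀ) i j
        = d i * (b (Fin.castLE hn i) : EuclideanSpace ℝ (Fin n2)) j := by
      rw [Matrix.mul_assoc, Matrix.diagonal_mul]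
      congr 1
      simp only [Matrix.mul_apply, Jmat, Matrix.of_apply, Matrix.transpose_apply]
      rw [Finset.sum_eq_single (Fin.castLE hn i)]
      · simp [hVdef]
      · intro c _ hc
        have : (i : ℕ) ≠ (c : ℕ) := by
          intro hcc
          exact hc (Fin.ext (by simp [← hcc]))
        simp [this]
      · simp
    rw [hL, hR, hwv i]
  calc Y = (U * Uᵀ) * Y := by rw [hUU, Matrix.one_mul]
    _ = U * (Uᵀ * Y) := by rw [Matrix.mul_assoc]
    _ = U * (Matrix.diagonal d * Jmat n1 n2 * Vᵀ) := by rw [key]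
    _ = U * (Matrix.diagonal d * Jmat n1 n2) * Vᵀ := by
        rw [← Matrix.mul_assoc U (Matrix.diagonal d * Jmat n1 n2) Vᵀ]


lemma nuclearNorm_svd (hn : n1 ≤ n2) {U : Matrix (Fin n1) (Fin n1) ℝ}
    {V : Matrix (Fin n2) (Fin n2) ℝ} {d : Fin n1 → ℝ}
    (hU : Uᵀ * U = 1) (hV : Vᵀ * V = 1) (hd : ∀ i, 0 ≤ d i) :
    nuclearNorm (U * (Matrix.diagonal d * Jmat n1 n2) * Vᵀ) = ∑ i, d i := by
  rw [nuclearNorm_conj _ hU hV,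
    nuclearNorm_psd_mul_J hn (Matrix.posSemidef_diagonal_iff.mpr hd), Matrix.trace_diagonal]

lemma rank_svd (hn : n1 ≤ n2) {U : Matrix (Fin n1) (Fin n1) ℝ}
    {V : Matrix (Fin n2) (Fin n2) ℝ} {d : Fin n1 → ℝ}
    (hU : Uᵀ * U = 1) (hV : Vᵀ * V = 1) :
    (U * (Matrix.diagonal d * Jmat n1 n2) * Vᵀ).rank = Fintype.card {i // d i ≠ 0} := by
  classical
  set Dm := Matrix.diagonal d * Jmat n1 n2 with hDm
  have hA : Dm * Dmᵀ = Matrix.diagonal (fun i => d i * d i) := by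
    rw [hDm, Matrix.transpose_mul, Matrix.mul_assoc, ← Matrix.mul_assoc (Jmat n1 n2),
      Jmat_mul_transpose hn, Matrix.one_mul, Matrix.diagonal_transpose,
      Matrix.diagonal_mul_diagonal]
  have hYt : (U * Dm * Vᵀ) * (U * Dm * Vᵀ)ᵀ = U * Matrix.diagonal (fun i => d i * d i) * Uᵀ := by
    rw [Matrix.transpose_mul, Matrix.transpose_mul, Matrix.transpose_transpose]
    calc U * Dm * Vᵀ * (V * (Dmᵀ * Uᵀ))
        = U * (Dm * ((Vᵀ * V) * (Dmᵀ * Uᵀ))) := by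
          simp only [Matrix.mul_assoc]
      _ = U * ((Dm * Dmᵀ) * Uᵀ) := by
          rw [hV, Matrix.one_mul, ← Matrix.mul_assoc Dm Dmᵀ Uᵀ]
      _ = U * Matrix.diagonal (fun i => d i * d i) * Uᵀ := by
          rw [hA, Matrix.mul_assoc]
  have hdetU : IsUnit U.det := by
    have h : Uᵀ.det * U.det = 1 := by
      have := congrArg Matrix.det hU
      rwa [Matrix.det_mul, Matrix.det_one] at this
    rw [Matrix.det_transpose] at h
    exact IsUnit.of_mul_eq_one _ h
  have hdetUt : IsUnit Uᵀ.det := by rwa [Matrix.det_transpose]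
  have h1 : (U * Dm * Vᵀ).rank = ((U * Dm * Vᵀ) * (U * Dm * Vᵀ)ᵀ).rank :=
    (Matrix.rank_self_mul_transpose _).symm
  rw [h1, hYt, Matrix.rank_mul_eq_left_of_isUnit_det Uᵀ _ hdetUt,
    Matrix.rank_mul_eq_right_of_isUnit_det U _ hdetU, Matrix.rank_diagonal]
  exact Fintype.card_congr (Equiv.subtypeEquivRight (fun i => by simp [mul_self_ne_zero]))

lemma mul_J_entry (hn : n1 ≤ n2) (S : Matrix (Fin n1) (Fin n1) ℝ) (i j : Fin n1) :
    (S * Jmat n1 n2) i (Fin.castLE hn j) = S i j := by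
  simp only [Matrix.mul_apply, Jmat, Matrix.of_apply]
  rw [Finset.sum_eq_single j]
  · simp
  · intro b _ hb
    have hb' : (b : ℕ) ≠ (j : ℕ) := fun hc => hb (Fin.ext hc)
    simp [hb']
  · simp

set_option maxHeartbeats 1600000 in
theorem part_one (hn : n1 ≤ n2) {U : Matrix (Fin n1) (Fin n1) ℝ} {V : Matrix (Fin n2) (Fin n2) ℝ}
    {d : Fin n1 → ℝ} (hU : Uᵀ * U = 1) (hV : Vᵀ * V = 1) (hd0 : ∀ i, 0 ≤ d i) {r : ℕ}
    (hcard : Fintype.card {i // d i ≠ 0} = r)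
    (m : ℕ) (Φ : Matrix (Fin n1) (Fin n2) ℝ →ₗ[ℝ] EuclideanSpace ℝ (Fin m))
    (hopt : ∀ X, Φ X = Φ (U * (Matrix.diagonal d * Jmat n1 n2) * Vᵀ)
      → X ≠ U * (Matrix.diagonal d * Jmat n1 n2) * Vᵀ
      → nuclearNorm (U * (Matrix.diagonal d * Jmat n1 n2) * Vᵀ) < nuclearNorm X) :
    r * (r + 1) / 2 ≤ m := by
  classical
  set X₀ := U * (Matrix.diagonal d * Jmat n1 n2) * Vᵀ with hX₀
  set A : Finset (Fin n1) := Finset.univ.filter (fun i => d i ≠ 0) with hA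
  have hAcard : A.card = r := by
    rw [← hcard]
    exact (Fintype.card_subtype _).symm
  -- the key injectivity statement
  have aux : ∀ S : Matrix (Fin n1) (Fin n1) ℝ, Sᵀ = S →
      (∀ i j, (d i = 0 ∨ d j = 0) → S i j = 0) →
      Φ (U * (S * Jmat n1 n2) * Vᵀ) = 0 → S.trace ≤ 0 → S ≠ 0 → False := by
    intro S hsym hsupp hphi htr hS0
    obtain ⟨i₀, j₀, hij⟩ : ∃ i j, S i j ≠ 0 := by
      by_contra hc
      push_neg at hc
      exact hS0 (by ext i j; simpa using hc i j)
    have hdi₀ : d i₀ ≠ 0 := fun h => hij (hsupp _ _ (Or.inl h))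
    have hAne : A.Nonempty := ⟨i₀, by simp [hA, hdi₀]⟩
    set dmin := A.inf' hAne d with hdmin
    have hdminpos : 0 < dmin := by
      rw [hdmin, Finset.lt_inf'_iff]
      intro i hi
      have hdi : d i ≠ 0 := by simpa [hA] using hi
      exact lt_of_le_of_ne (hd0 i) (Ne.symm hdi)
    set Cs := (∑ i, ∑ j, |S i j|) + 1 with hCs
    have hCpos : 0 < Cs := by
      have h0 : (0:ℝ) ≤ ∑ i, ∑ j, |S i j| :=
        Finset.sum_nonneg fun i _ => Finset.sum_nonneg fun j _ => abs_nonneg _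
      rw [hCs]; linarith
    set t := dmin / Cs with ht
    have htpos : 0 < t := div_pos hdminpos hCpos
    have hMps : (Matrix.diagonal d + t • S).PosSemidef := by
      refine Matrix.PosSemidef.of_dotProduct_mulVec_nonneg ?_ ?_
      · show (Matrix.diagonal d + t • S)ᴴ = _
        rw [Matrix.conjTranspose_eq_transpose_of_trivial, Matrix.transpose_add,
          Matrix.transpose_smul, Matrix.diagonal_transpose, hsym]
      · intro x
        have hstar : star x = x := funext fun i => star_trivial _
        rw [hstar, Matrix.add_mulVec, dotProduct_add, Matrix.smul_mulVec,
          dotProduct_smul]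
        set Q := ∑ i ∈ A, x i ^ 2 with hQ
        have hQ0 : 0 ≤ Q := Finset.sum_nonneg fun i _ => sq_nonneg _
        have hsq : ∀ i ∈ A, x i ^ 2 ≤ Q := fun i hi =>
          Finset.single_le_sum (fun j _ => sq_nonneg (x j)) hi
        have h1 : dmin * Q ≤ x ⬝ᵥ (Matrix.diagonal d *ᵥ x) := by
          have hdot : x ⬝ᵥ (Matrix.diagonal d *ᵥ x) = ∑ i, d i * x i ^ 2 := by
            simp only [dotProduct, Matrix.mulVec_diagonal]
            exact Finset.sum_congr rfl fun i _ => by ring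
          rw [hdot]
          calc dmin * Q = ∑ i ∈ A, dmin * x i ^ 2 := by rw [hQ, Finset.mul_sum]
            _ ≤ ∑ i ∈ A, d i * x i ^ 2 := Finset.sum_le_sum fun i hi =>
                mul_le_mul_of_nonneg_right (Finset.inf'_le d hi) (sq_nonneg _)
            _ ≤ ∑ i, d i * x i ^ 2 := Finset.sum_le_sum_of_subset_of_nonneg
                (Finset.subset_univ A) (fun i _ _ => mul_nonneg (hd0 i) (sq_nonneg _))
        have h2 : |x ⬝ᵥ (S *ᵥ x)| ≤ (Cs - 1) * Q := by
          have hexp : x ⬝ᵥ (S *ᵥ x) = ∑ i, ∑ j, x i * S i j * x j := by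
            simp only [dotProduct, Matrix.mulVec, dotProduct, Finset.mul_sum]
            exact Finset.sum_congr rfl fun i _ => Finset.sum_congr rfl fun j _ => by ring
          rw [hexp]
          have hterm : ∀ i j : Fin n1, |x i * S i j * x j| ≤ |S i j| * Q := by
            intro i j
            by_cases hSij : S i j = 0
            · simp [hSij, hQ0]
            · have hdi : d i ≠ 0 := fun h => hSij (hsupp _ _ (Or.inl h))
              have hdj : d j ≠ 0 := fun h => hSij (hsupp _ _ (Or.inr h))
              have hiA : i ∈ A := by simp [hA, hdi]
              have hjA : j ∈ A := by simp [hA, hdj]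
              have hxi := hsq i hiA
              have hxj := hsq j hjA
              have habs : |x i * S i j * x j| = |S i j| * (|x i| * |x j|) := by
                rw [abs_mul, abs_mul]; ring
              rw [habs]
              have hxx : |x i| * |x j| ≤ Q := by
                nlinarith [sq_nonneg (|x i| - |x j|), sq_abs (x i), sq_abs (x j),
                  abs_nonneg (x i), abs_nonneg (x j)]
              exact mul_le_mul_of_nonneg_left hxx (abs_nonneg _)
          calc |∑ i, ∑ j, x i * S i j * x j| ≤ ∑ i, |∑ j, x i * S i j * x j| :=
                Finset.abs_sum_le_sum_abs _ _
            _ ≤ ∑ i, ∑ j, |x i * S i j * x j| :=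
                Finset.sum_le_sum fun i _ => Finset.abs_sum_le_sum_abs _ _
            _ ≤ ∑ i, ∑ j, |S i j| * Q :=
                Finset.sum_le_sum fun i _ => Finset.sum_le_sum fun j _ => hterm i j
            _ = (∑ i, ∑ j, |S i j|) * Q := by
                rw [Finset.sum_mul]
                exact Finset.sum_congr rfl fun i _ => (Finset.sum_mul _ _ _).symm
            _ = (Cs - 1) * Q := by rw [hCs]; ring
        have h3 : -((Cs - 1) * Q) ≤ x ⬝ᵥ (S *ᵥ x) := (abs_le.mp h2).1
        have htC : t * Cs = dmin := div_mul_cancel₀ _ (ne_of_gt hCpos)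
        have h4 := mul_le_mul_of_nonneg_left h3 htpos.le
        have h5 : 0 ≤ t * Q := mul_nonneg htpos.le hQ0
        simp only [smul_eq_mul]
        nlinarith [h1, h4, h5, htC]
    have hnXt : nuclearNorm (U * ((Matrix.diagonal d + t • S) * Jmat n1 n2) * Vᵀ)
        = (∑ i, d i) + t * S.trace := by
      rw [nuclearNorm_conj _ hU hV, nuclearNorm_psd_mul_J hn hMps, Matrix.trace_add,
        Matrix.trace_smul, Matrix.trace_diagonal, smul_eq_mul]
    have hX₀nn : nuclearNorm X₀ = ∑ i, d i := nuclearNorm_svd hn hU hV hd0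
    have hXtdecomp : U * ((Matrix.diagonal d + t • S) * Jmat n1 n2) * Vᵀ
        = X₀ + t • (U * (S * Jmat n1 n2) * Vᵀ) := by
      rw [hX₀]
      rw [Matrix.add_mul, Matrix.smul_mul, Matrix.mul_add, Matrix.mul_smul,
        Matrix.add_mul, Matrix.smul_mul]
    have hphi_t : Φ (U * ((Matrix.diagonal d + t • S) * Jmat n1 n2) * Vᵀ) = Φ X₀ := by
      rw [hXtdecomp, map_add, _root_.map_smul, hphi, smul_zero, add_zero]
    have hne : U * ((Matrix.diagonal d + t • S) * Jmat n1 n2) * Vᵀ ≠ X₀ := by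
      rw [hXtdecomp]
      intro hcontra
      have h5 : t • (U * (S * Jmat n1 n2) * Vᵀ) = 0 := add_eq_left.mp hcontra
      have hN : U * (S * Jmat n1 n2) * Vᵀ = 0 := by
        rcases smul_eq_zero.mp h5 with h | h
        · exact absurd h (ne_of_gt htpos)
        · exact h
      have hSJ : S * Jmat n1 n2 = 0 := by
        have h6 : Uᵀ * (U * (S * Jmat n1 n2) * Vᵀ) * V = S * Jmat n1 n2 := by
          rw [Matrix.mul_assoc U (S * Jmat n1 n2) Vᵀ, ← Matrix.mul_assoc Uᵀ U _, hU,
            Matrix.one_mul, Matrix.mul_assoc (S * Jmat n1 n2) Vᵀ V, hV, Matrix.mul_one]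
        rw [← h6, hN]
        simp
      apply hij
      rw [← mul_J_entry hn S i₀ j₀, hSJ]
      simp
    have hlt := hopt _ hphi_t hne
    rw [hnXt, hX₀nn] at hlt
    have h7 := mul_le_mul_of_nonneg_left htr htpos.le
    rw [mul_zero] at h7
    linarith
  have main : ∀ S : Matrix (Fin n1) (Fin n1) ℝ, Sᵀ = S →
      (∀ i j, (d i = 0 ∨ d j = 0) → S i j = 0) →
      Φ (U * (S * Jmat n1 n2) * Vᵀ) = 0 → S = 0 := by
    intro S hsym hsupp hphi
    by_contra hS0
    rcases le_or_gt S.trace 0 with htr | htr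
    · exact aux S hsym hsupp hphi htr hS0
    · refine aux (-S) (by rw [Matrix.transpose_neg, hsym]) (fun i j h => by simp [hsupp i j h])
        ?_ (by rw [Matrix.trace_neg]; linarith) (neg_ne_zero.mpr hS0)
      rw [Matrix.neg_mul, Matrix.mul_neg, Matrix.neg_mul, map_neg, hphi, neg_zero]
  -- build the linear map from symmetric data
  set e : Fin r ≃ {x // x ∈ A} := (Finset.equivFinOfCardEq hAcard).symm with he
  set matrixOf : (Sym2 (Fin r) → ℝ) → Matrix (Fin n1) (Fin n1) ℝ := fun f =>
    Matrix.of fun i j =>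
      if hi : i ∈ A then if hj : j ∈ A then f (s(e.symm ⟨i, hi⟩, e.symm ⟨j, hj⟩)) else 0
      else 0 with hmo
  have hmo_eval : ∀ f (a b : Fin r), matrixOf f (e a : Fin n1) (e b : Fin n1) = f s(a, b) := by
    intro f a b
    simp only [hmo, Matrix.of_apply]
    rw [dif_pos (e a).2, dif_pos (e b).2]
    simp [Subtype.coe_eta]
  have hmo_symm : ∀ f, (matrixOf f)ᵀ = matrixOf f := by
    intro f
    ext i j
    simp only [Matrix.transpose_apply, hmo, Matrix.of_apply]
    split_ifs with h1 h2 h3 h4 <;> try rfl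
    · exact congrArg f (Sym2.eq_swap)
  have hmo_supp : ∀ f i j, (d i = 0 ∨ d j = 0) → matrixOf f i j = 0 := by
    intro f i j hdij
    simp only [hmo, Matrix.of_apply]
    rcases hdij with h | h
    · rw [dif_neg (by simp [hA, h])]
    · by_cases hi : i ∈ A
      · rw [dif_pos hi, dif_neg (by simp [hA, h])]
      · rw [dif_neg hi]
  have hmo_add : ∀ f g, matrixOf (f + g) = matrixOf f + matrixOf g := by
    intro f g
    ext i j
    simp only [hmo, Matrix.of_apply, Matrix.add_apply]
    split_ifs <;> simp
  have hmo_smul : ∀ (c : ℝ) f, matrixOf (c • f) = c • matrixOf f := by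
    intro c f
    ext i j
    simp only [hmo, Matrix.of_apply, Matrix.smul_apply, smul_eq_mul]
    split_ifs <;> simp
  set T : (Sym2 (Fin r) → ℝ) →ₗ[ℝ] EuclideanSpace ℝ (Fin m) :=
    { toFun := fun f => Φ (U * (matrixOf f * Jmat n1 n2) * Vᵀ)
      map_add' := by
        intro f g
        show Φ (U * (matrixOf (f + g) * Jmat n1 n2) * Vᵀ)
          = Φ (U * (matrixOf f * Jmat n1 n2) * Vᵀ) + Φ (U * (matrixOf g * Jmat n1 n2) * Vᵀ)
        rw [hmo_add, Matrix.add_mul, Matrix.mul_add, Matrix.add_mul, map_add]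
      map_smul' := by
        intro c f
        show Φ (U * (matrixOf (c • f) * Jmat n1 n2) * Vᵀ)
          = c • Φ (U * (matrixOf f * Jmat n1 n2) * Vᵀ)
        rw [hmo_smul, Matrix.smul_mul, Matrix.mul_smul, Matrix.smul_mul, _root_.map_smul] } with hT
  have hTinj : Function.Injective T := by
    rw [injective_iff_map_eq_zero]
    intro f hf
    have hS := main (matrixOf f) (hmo_symm f) (hmo_supp f) hf
    funext q
    induction q using Sym2.ind with
    | _ a b =>
      have := hmo_eval f a b
      rw [hS] at this
      simp only [Matrix.zero_apply] at this
      rw [Pi.zero_apply, ← this]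
  calc r * (r + 1) / 2 = Fintype.card (Sym2 (Fin r)) := by
        rw [Sym2.card, Fintype.card_fin, Nat.choose_two_right, Nat.add_sub_cancel, Nat.mul_comm]
    _ = Module.finrank ℝ (Sym2 (Fin r) → ℝ) := (Module.finrank_fintype_fun_eq_card ℝ).symm
    _ ≤ Module.finrank ℝ (EuclideanSpace ℝ (Fin m)) :=
        LinearMap.finrank_le_finrank_of_injective hTinj
    _ = m := finrank_euclideanSpace_fin


set_option maxHeartbeats 2000000 in
theorem part_two (hn : n1 ≤ n2) {U : Matrix (Fin n1) (Fin n1) ℝ} {V : Matrix (Fin n2) (Fin n2) ℝ}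
    {d : Fin n1 → ℝ} (hU : Uᵀ * U = 1) (hV : Vᵀ * V = 1) (hd0 : ∀ i, 0 ≤ d i) {r : ℕ}
    (hcard : Fintype.card {i // d i ≠ 0} = r) :
    ∃ Φ : Matrix (Fin n1) (Fin n2) ℝ →ₗ[ℝ] EuclideanSpace ℝ (Fin (r * (r + 1) / 2)),
      ∀ X, Φ X = Φ (U * (Matrix.diagonal d * Jmat n1 n2) * Vᵀ)
        → X ≠ U * (Matrix.diagonal d * Jmat n1 n2) * Vᵀ
        → nuclearNorm (U * (Matrix.diagonal d * Jmat n1 n2) * Vᵀ) < nuclearNorm X := by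
  classical
  have hUU : U * Uᵀ = 1 := mul_eq_one_comm.mp hU
  have hVV : V * Vᵀ = 1 := mul_eq_one_comm.mp hV
  set X₀ := U * (Matrix.diagonal d * Jmat n1 n2) * Vᵀ with hX₀
  set A : Finset (Fin n1) := Finset.univ.filter (fun i => d i ≠ 0) with hA
  have hAcard : A.card = r := by
    rw [← hcard]
    exact (Fintype.card_subtype _).symm
  set e : Fin r ≃ {x // x ∈ A} := (Finset.equivFinOfCardEq hAcard).symm with he
  set ι : Fin n1 → Fin n2 := Fin.castLE hn with hι
  have hιinj : Function.Injective ι := Fin.castLE_injective hn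
  have hcard2 : Fintype.card (Sym2 (Fin r)) = r * (r + 1) / 2 := by
    rw [Sym2.card, Fintype.card_fin, Nat.choose_two_right, Nat.add_sub_cancel, Nat.mul_comm]
  set g : Sym2 (Fin r) ≃ Fin (r * (r + 1) / 2) := Fintype.equivFinOfCardEq hcard2 with hg
  set ψ : Matrix (Fin n1) (Fin n2) ℝ → Fin r → Fin r → ℝ := fun X a b =>
    (Uᵀ * X * V) ((e a : Fin n1)) (ι (e b)) + (Uᵀ * X * V) ((e b : Fin n1)) (ι (e a)) with hψ
  have hψs : ∀ X a b, ψ X a b = ψ X b a := by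
    intro X a b; rw [hψ]; exact add_comm _ _
  have hψadd : ∀ X Y a b, ψ (X + Y) a b = ψ X a b + ψ Y a b := by
    intro X Y a b
    simp only [hψ, Matrix.mul_add, Matrix.add_mul, Matrix.add_apply]
    ring
  have hψsmul : ∀ (t : ℝ) X a b, ψ (t • X) a b = t * ψ X a b := by
    intro t X a b
    simp only [hψ, Matrix.mul_smul, Matrix.smul_mul, Matrix.smul_apply, smul_eq_mul]
    ring
  refine ⟨{ toFun := fun X => WithLp.toLp 2 fun q => Sym2.lift ⟨ψ X, hψs X⟩ (g.symm q)
            map_add' := ?_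
            map_smul' := ?_ }, ?_⟩
  · intro X Y
    ext q
    show Sym2.lift ⟨ψ (X + Y), hψs _⟩ (g.symm q) = Sym2.lift ⟨ψ X, hψs X⟩ (g.symm q)
      + Sym2.lift ⟨ψ Y, hψs Y⟩ (g.symm q)
    induction g.symm q using Sym2.ind with
    | _ a b => simp only [Sym2.lift_mk]; exact hψadd X Y a b
  · intro t X
    ext q
    show Sym2.lift ⟨ψ (t • X), hψs _⟩ (g.symm q) = t * Sym2.lift ⟨ψ X, hψs X⟩ (g.symm q)
    induction g.symm q using Sym2.ind with
    | _ a b => simp only [Sym2.lift_mk]; exact hψsmul t X a b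
  intro X hphi hne
  -- diag entry helper for D tilde
  have hecoe : ∀ a b : Fin r, (((e a : Fin n1)) : ℕ) = (((e b : Fin n1)) : ℕ) ↔ a = b := by
    intro a b
    constructor
    · intro h
      exact e.injective (Subtype.ext (Fin.ext h))
    · intro h; rw [h]
  have hDt : ∀ a b : Fin r, (Matrix.diagonal d * Jmat n1 n2) ((e a : Fin n1)) (ι (e b))
      = if a = b then d (e a : Fin n1) else 0 := by
    intro a b
    rw [Matrix.diagonal_mul]
    simp only [Jmat, Matrix.of_apply, hι, Fin.coe_castLE]
    rw [if_congr (hecoe a b) rfl rfl, mul_ite, mul_one, mul_zero]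
  set Z := Uᵀ * X * V with hZ
  have hZ0 : Uᵀ * X₀ * V = Matrix.diagonal d * Jmat n1 n2 := by
    rw [hX₀, Matrix.mul_assoc U _ Vᵀ, ← Matrix.mul_assoc Uᵀ U _, hU, Matrix.one_mul,
      Matrix.mul_assoc _ Vᵀ V, hV, Matrix.mul_one]
  have hconstraint : ∀ a b : Fin r, ψ X a b = ψ X₀ a b := by
    intro a b
    have h1 := congrFun (congrArg WithLp.ofLp hphi) (g s(a, b))
    simpa only [LinearMap.coe_mk, AddHom.coe_mk, Equiv.symm_apply_apply, Sym2.lift_mk] using h1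
  have hψX₀ : ∀ a b : Fin r, ψ X₀ a b = 2 * (if a = b then d (e a : Fin n1) else 0) := by
    intro a b
    rw [hψ]
    show (Uᵀ * X₀ * V) _ _ + (Uᵀ * X₀ * V) _ _ = _
    rw [hZ0, hDt a b, hDt b a]
    by_cases h : a = b
    · subst h; simp only [if_pos rfl]; ring
    · rw [if_neg h, if_neg (fun hc => h hc.symm)]; ring
  have hdiagZ : ∀ a : Fin r, Z ((e a : Fin n1)) (ι (e a)) = d (e a : Fin n1) := by
    intro a
    have h1 := hconstraint a a
    rw [hψX₀ a a, if_pos rfl] at h1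
    have h2 : ψ X a a = 2 * Z ((e a : Fin n1)) (ι (e a)) := by rw [hψ, hZ]; ring
    rw [h2] at h1
    linarith
  -- SVD of X
  obtain ⟨P, Q, c, hP, hQ, hc0, hXsvd⟩ := exists_svd hn X
  set P' := Uᵀ * P with hP'def
  set Q' := Vᵀ * Q with hQ'def
  have hP' : P'ᵀ * P' = 1 := by
    rw [hP'def, Matrix.transpose_mul, Matrix.transpose_transpose,
      Matrix.mul_assoc Pᵀ U (Uᵀ * P), ← Matrix.mul_assoc U Uᵀ P, hUU, Matrix.one_mul, hP]
  have hQ' : Q'ᵀ * Q' = 1 := by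
    rw [hQ'def, Matrix.transpose_mul, Matrix.transpose_transpose,
      Matrix.mul_assoc Qᵀ V (Vᵀ * Q), ← Matrix.mul_assoc V Vᵀ Q, hVV, Matrix.one_mul, hQ]
  have hZform : Z = P' * ((Matrix.diagonal c * Jmat n1 n2) * Q'ᵀ) := by
    rw [hZ, hXsvd, hP'def, hQ'def, Matrix.transpose_mul, Matrix.transpose_transpose]
    simp only [Matrix.mul_assoc]
  have hDJ : ∀ (k : Fin n1) (q : Fin n2),
      ((Matrix.diagonal c * Jmat n1 n2) * Q'ᵀ) k q = c k * Q' q (ι k) := by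
    intro k q
    have hentry : ∀ l : Fin n2, (Matrix.diagonal c * Jmat n1 n2) k l * Q'ᵀ l q
        = if l = ι k then c k * Q' q (ι k) else 0 := by
      intro l
      rw [Matrix.diagonal_mul]
      simp only [Jmat, Matrix.of_apply, Matrix.transpose_apply]
      by_cases h : l = ι k
      · subst h
        rw [if_pos (by simp [hι]), if_pos rfl]
        ring
      · rw [if_neg (fun hc => h (Fin.ext (by simp [hι, ← hc]))), if_neg h]
        ring
    rw [Matrix.mul_apply, Finset.sum_congr rfl (fun l _ => hentry l),
      Finset.sum_ite_eq' Finset.univ (ι k) _]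
    simp
  have hZentry : ∀ p q, Z p q = ∑ k, P' p k * (c k * Q' q (ι k)) := by
    intro p q
    rw [hZform, Matrix.mul_apply]
    exact Finset.sum_congr rfl fun k _ => by rw [hDJ]
  -- column norms
  have hPcol : ∀ k, ∑ p, P' p k ^ 2 = 1 := by
    intro k
    have h1 := congrArg (fun M => M k k) hP'
    simp only [Matrix.mul_apply, Matrix.transpose_apply, Matrix.one_apply_eq] at h1
    rw [← h1]
    exact Finset.sum_congr rfl fun p _ => by ring
  have hQcol : ∀ l, ∑ q, Q' q l ^ 2 = 1 := by
    intro l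
    have h1 := congrArg (fun M => M l l) hQ'
    simp only [Matrix.mul_apply, Matrix.transpose_apply, Matrix.one_apply_eq] at h1
    rw [← h1]
    exact Finset.sum_congr rfl fun p _ => by ring
  -- sum transport
  have hsumA : ∀ f : Fin n1 → ℝ, ∑ a : Fin r, f ((e a : Fin n1)) = ∑ i ∈ A, f i := by
    intro f
    calc ∑ a : Fin r, f ((e a : Fin n1)) = ∑ x : {x // x ∈ A}, f (x : Fin n1) :=
          Fintype.sum_equiv e _ _ (fun a => rfl)
      _ = ∑ i ∈ A, f i := Finset.sum_coe_sort A f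
  have hs1 : ∀ k, ∑ a : Fin r, P' ((e a : Fin n1)) k ^ 2 ≤ 1 := by
    intro k
    rw [hsumA (fun i => P' i k ^ 2), ← hPcol k]
    exact Finset.sum_le_sum_of_subset_of_nonneg (Finset.subset_univ A)
      (fun i _ _ => sq_nonneg _)
  have hsumB : ∀ (fq : Fin n2 → ℝ), ∑ a : Fin r, fq (ι (e a : Fin n1)) = ∑ j ∈ A.image ι, fq j := by
    intro fq
    rw [Finset.sum_image (fun x _ y _ h => hιinj h)]
    exact hsumA (fun i => fq (ι i))
  have hs2 : ∀ k, ∑ a : Fin r, Q' (ι (e a : Fin n1)) (ι k) ^ 2 ≤ 1 := by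
    intro k
    rw [hsumB (fun j => Q' j (ι k) ^ 2), ← hQcol (ι k)]
    exact Finset.sum_le_sum_of_subset_of_nonneg (Finset.subset_univ _)
      (fun i _ _ => sq_nonneg _)
  set colsum : Fin n1 → ℝ := fun k => ∑ a : Fin r, P' ((e a : Fin n1)) k * Q' (ι (e a : Fin n1)) (ι k)
    with hcolsumdef
  have hcolsum : ∀ k, colsum k ≤ 1 := by
    intro k
    have h2 : ∑ a : Fin r, 2 * (P' ((e a : Fin n1)) k * Q' (ι (e a : Fin n1)) (ι k))
        ≤ ∑ a : Fin r, (P' ((e a : Fin n1)) k ^ 2 + Q' (ι (e a : Fin n1)) (ι k) ^ 2) :=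
      Finset.sum_le_sum fun a _ => by nlinarith [sq_nonneg (P' ((e a : Fin n1)) k - Q' (ι (e a : Fin n1)) (ι k))]
    rw [← Finset.mul_sum, Finset.sum_add_distrib] at h2
    have := hs1 k
    have := hs2 k
    rw [hcolsumdef]
    linarith
  have htr1 : ∑ a : Fin r, Z ((e a : Fin n1)) (ι (e a)) = ∑ k, c k * colsum k := by
    have h1 : ∀ a : Fin r, Z ((e a : Fin n1)) (ι (e a)) = ∑ k, P' ((e a : Fin n1)) k * (c k * Q' (ι (e a)) (ι k)) :=
      fun a => hZentry _ _
    rw [Finset.sum_congr rfl (fun a _ => h1 a), Finset.sum_comm]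
    refine Finset.sum_congr rfl fun k _ => ?_
    rw [hcolsumdef, Finset.mul_sum]
    exact Finset.sum_congr rfl fun a _ => by ring
  have htr2 : ∑ a : Fin r, Z ((e a : Fin n1)) (ι (e a)) = ∑ i, d i := by
    rw [Finset.sum_congr rfl (fun a _ => hdiagZ a), hsumA d]
    refine Finset.sum_subset (Finset.subset_univ A) ?_
    intro i _ hiA
    have : ¬ (d i ≠ 0) := by simpa [hA] using hiA
    exact not_not.mp this
  have hnX : nuclearNorm X = ∑ k, c k := by
    rw [hXsvd]; exact nuclearNorm_svd hn hP hQ hc0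
  have hnX₀ : nuclearNorm X₀ = ∑ i, d i := by
    rw [hX₀]; exact nuclearNorm_svd hn hU hV hd0
  have hle : ∑ k, c k * colsum k ≤ ∑ k, c k := by
    refine Finset.sum_le_sum fun k _ => ?_
    calc c k * colsum k ≤ c k * 1 := mul_le_mul_of_nonneg_left (hcolsum k) (hc0 k)
      _ = c k := mul_one _
  have hnorms : nuclearNorm X₀ ≤ nuclearNorm X := by
    rw [hnX, hnX₀, ← htr2, htr1]; exact hle
  -- strictness
  by_contra hnot
  have heq : nuclearNorm X = nuclearNorm X₀ := le_antisymm (le_of_not_gt hnot) hnorms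
  have heqsum : ∑ k, c k * colsum k = ∑ k, c k := by
    have h1 : ∑ k, c k * colsum k = ∑ i, d i := by rw [← htr1, htr2]
    have h2 : (∑ i, d i : ℝ) = ∑ k, c k := by rw [← hnX₀, ← hnX, heq]
    rw [h1, h2]
  have hker : ∀ k, c k ≠ 0 → colsum k = 1 := by
    have hzero : ∑ k, (c k - c k * colsum k) = 0 := by
      rw [Finset.sum_sub_distrib, heqsum, sub_self]
    have hnn : ∀ k ∈ Finset.univ, (0:ℝ) ≤ c k - c k * colsum k := fun k _ => by
      nlinarith [hc0 k, hcolsum k]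
    have hall := (Finset.sum_eq_zero_iff_of_nonneg hnn).mp hzero
    intro k hck
    have hk := hall k (Finset.mem_univ k)
    have : c k * (1 - colsum k) = 0 := by linarith
    rcases mul_eq_zero.mp this with h | h
    · exact absurd h hck
    · linarith
  have hPQk : ∀ k, c k ≠ 0 →
      (∀ a : Fin r, P' ((e a : Fin n1)) k = Q' (ι (e a : Fin n1)) (ι k))
      ∧ (∀ i, i ∉ A → P' i k = 0)
      ∧ (∀ j, j ∉ A.image ι → Q' j (ι k) = 0) := by
    intro k hck
    have h1 := hs1 k
    have h2 := hs2 k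
    have hcs := hker k hck
    have hdiff : ∑ a : Fin r, (P' ((e a : Fin n1)) k - Q' (ι (e a : Fin n1)) (ι k)) ^ 2
        = (∑ a : Fin r, P' ((e a : Fin n1)) k ^ 2) + (∑ a : Fin r, Q' (ι (e a : Fin n1)) (ι k) ^ 2)
          - 2 * colsum k := by
      rw [hcolsumdef, Finset.mul_sum, ← Finset.sum_add_distrib, ← Finset.sum_sub_distrib]
      exact Finset.sum_congr rfl fun a _ => by ring
    have hdn : (0:ℝ) ≤ ∑ a : Fin r, (P' ((e a : Fin n1)) k - Q' (ι (e a : Fin n1)) (ι k)) ^ 2 :=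
      Finset.sum_nonneg fun a _ => sq_nonneg _
    have hA1 : ∑ a : Fin r, P' ((e a : Fin n1)) k ^ 2 = 1 := by
      rw [hcs] at hdiff; linarith
    have hB1 : ∑ a : Fin r, Q' (ι (e a : Fin n1)) (ι k) ^ 2 = 1 := by
      rw [hcs] at hdiff; linarith
    have hd0' : ∑ a : Fin r, (P' ((e a : Fin n1)) k - Q' (ι (e a : Fin n1)) (ι k)) ^ 2 = 0 := by
      rw [hdiff, hA1, hB1, hcs]; ring
    have heach := (Finset.sum_eq_zero_iff_of_nonneg (fun a _ => sq_nonneg _)).mp hd0'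
    refine ⟨?_, ?_, ?_⟩
    · intro a
      have := heach a (Finset.mem_univ a)
      have h3 : P' ((e a : Fin n1)) k - Q' (ι (e a : Fin n1)) (ι k) = 0 := by
        exact pow_eq_zero_iff (two_ne_zero) |>.mp this
      linarith
    · intro i hiA
      have hPin : ∑ i ∈ A, P' i k ^ 2 = 1 := by rw [← hsumA (fun i => P' i k ^ 2)]; exact hA1
      have hsplit := Finset.sum_sdiff (Finset.subset_univ A) (f := fun i => P' i k ^ 2)
      have hPout : ∑ i ∈ Finset.univ \ A, P' i k ^ 2 = 0 := by
        rw [hPin, hPcol k] at hsplit; linarith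
      have := (Finset.sum_eq_zero_iff_of_nonneg (fun i _ => sq_nonneg _)).mp hPout i
        (Finset.mem_sdiff.mpr ⟨Finset.mem_univ i, hiA⟩)
      exact pow_eq_zero_iff (two_ne_zero) |>.mp this
    · intro j hjB
      have hQin : ∑ j ∈ A.image ι, Q' j (ι k) ^ 2 = 1 := by
        rw [← hsumB (fun j => Q' j (ι k) ^ 2)]; exact hB1
      have hsplit := Finset.sum_sdiff (Finset.subset_univ (A.image ι)) (f := fun j => Q' j (ι k) ^ 2)
      have hQout : ∑ j ∈ Finset.univ \ A.image ι, Q' j (ι k) ^ 2 = 0 := by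
        rw [hQin, hQcol (ι k)] at hsplit; linarith
      have := (Finset.sum_eq_zero_iff_of_nonneg (fun j _ => sq_nonneg _)).mp hQout j
        (Finset.mem_sdiff.mpr ⟨Finset.mem_univ j, hjB⟩)
      exact pow_eq_zero_iff (two_ne_zero) |>.mp this
  -- Z is symmetric on the block
  have hsymm_block : ∀ a b : Fin r, Z ((e a : Fin n1)) (ι (e b)) = Z ((e b : Fin n1)) (ι (e a)) := by
    intro a b
    rw [hZentry, hZentry]
    refine Finset.sum_congr rfl fun k _ => ?_
    by_cases hck : c k = 0
    · simp [hck]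
    · obtain ⟨hPQ, _, _⟩ := hPQk k hck
      rw [← hPQ b, ← hPQ a]
      ring
  have hblock : ∀ a b : Fin r, Z ((e a : Fin n1)) (ι (e b)) = if a = b then d (e a : Fin n1) else 0 := by
    intro a b
    have h1 := hconstraint a b
    rw [hψX₀ a b] at h1
    have h2 : ψ X a b = 2 * Z ((e a : Fin n1)) (ι (e b)) := by
      show Z ((e a : Fin n1)) (ι (e b)) + Z ((e b : Fin n1)) (ι (e a)) = _
      linarith [hsymm_block a b]
    rw [h2] at h1
    linarith
  -- conclude Z = diagonal d * J
  have hZdiag : Z = Matrix.diagonal d * Jmat n1 n2 := by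
    ext p q
    by_cases hp : p ∈ A
    · by_cases hq : q ∈ A.image ι
      · obtain ⟨i, hiA, hiq⟩ := Finset.mem_image.mp hq
        have hpa : ((e (e.symm ⟨p, hp⟩) : Fin n1)) = p := by simp
        have hib : ((e (e.symm ⟨i, hiA⟩) : Fin n1)) = i := by simp
        calc Z p q = Z ((e (e.symm ⟨p, hp⟩) : Fin n1)) (ι (e (e.symm ⟨i, hiA⟩))) := by
              rw [hpa, hib, hiq]
          _ = if e.symm ⟨p, hp⟩ = e.symm ⟨i, hiA⟩ then d ((e (e.symm ⟨p, hp⟩) : Fin n1)) else 0 :=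
              hblock _ _
          _ = (Matrix.diagonal d * Jmat n1 n2) ((e (e.symm ⟨p, hp⟩) : Fin n1)) (ι (e (e.symm ⟨i, hiA⟩))) :=
              (hDt _ _).symm
          _ = (Matrix.diagonal d * Jmat n1 n2) p q := by rw [hpa, hib, hiq]
      · have hZ0' : Z p q = 0 := by
          rw [hZentry]
          refine Finset.sum_eq_zero fun k _ => ?_
          by_cases hck : c k = 0
          · simp [hck]
          · obtain ⟨_, _, hQ0⟩ := hPQk k hck
            -- need q = ι of something? q ∉ image: Q' q (ι k) = 0
            rw [hQ0 q hq]
            ring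
        rw [hZ0', Matrix.diagonal_mul]
        by_cases hpq : (p : ℕ) = (q : ℕ)
        · exfalso
          apply hq
          refine Finset.mem_image.mpr ⟨p, hp, ?_⟩
          exact Fin.ext (by simp [hι, hpq])
        · simp [Jmat, hpq]
    · have hdp : d p = 0 := by
        have : ¬ (d p ≠ 0) := by simpa [hA] using hp
        exact not_not.mp this
      have hZ0' : Z p q = 0 := by
        rw [hZentry]
        refine Finset.sum_eq_zero fun k _ => ?_
        by_cases hck : c k = 0
        · simp [hck]
        · obtain ⟨_, hP0, _⟩ := hPQk k hck
          rw [hP0 p hp]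
          ring
      rw [hZ0', Matrix.diagonal_mul, hdp]
      simp
  -- reconstruct X
  have hXrec : X = U * Z * Vᵀ := by
    rw [hZ]
    calc X = (U * Uᵀ) * X * (V * Vᵀ) := by rw [hUU, hVV, Matrix.one_mul, Matrix.mul_one]
      _ = U * (Uᵀ * X * V) * Vᵀ := by simp only [Matrix.mul_assoc]
  exact hne (by rw [hXrec, hZdiag])


end MMB

/-- **Corollary (Minimum bound for exact recovery).**
Let `X₀` be an `n1 × n2` matrix of rank `r`.
(i) If `Φ : ℝ^{n1×n2} → ℝ^m` is linear and `X₀` is the unique optimal solution of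
`min ‖X‖_* s.t. ΦX = ΦX₀`, then `m ≥ r(r+1)/2`.
(ii) There exists a linear operator `Φ : ℝ^{n1×n2} → ℝ^{r(r+1)/2}` for which `X₀` is
the unique optimal solution of this problem. -/
theorem minimum_measurement_bound (n1 n2 r : ℕ) (hn : n1 ≤ n2)
    (X₀ : Matrix (Fin n1) (Fin n2) ℝ) (hr : X₀.rank = r) :
    (∀ (m : ℕ) (Φ : Matrix (Fin n1) (Fin n2) ℝ →ₗ[ℝ] EuclideanSpace ℝ (Fin m)),
      (∀ X, Φ X = Φ X₀ → X ≠ X₀ → nuclearNorm X₀ < nuclearNorm X) →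
      r * (r + 1) / 2 ≤ m) ∧
    (∃ Φ : Matrix (Fin n1) (Fin n2) ℝ →ₗ[ℝ] EuclideanSpace ℝ (Fin (r * (r + 1) / 2)),
      ∀ X, Φ X = Φ X₀ → X ≠ X₀ → nuclearNorm X₀ < nuclearNorm X) := by
  classical
  obtain ⟨U, V, d, hU, hV, hd0, hY⟩ := MMB.exists_svd hn X₀
  have hcards : Fintype.card {i // d i ≠ 0} = r := by
    rw [← MMB.rank_svd hn hU hV, ← hY, hr]
  constructor
  · intro m Φ hopt
    refine MMB.part_one hn hU hV hd0 hcards m Φ ?_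
    intro X h1 h2
    rw [← hY] at h1 h2 ⊢
    exact hopt X h1 h2
  · obtain ⟨Φ, hΦ⟩ := MMB.part_two hn hU hV hd0 hcards
    refine ⟨Φ, ?_⟩
    intro X h1 h2
    rw [hY] at h1 h2 ⊢
    exact hΦ X h1 h2
end

section
/- Consider the problem min_{X ∈ ℝ^{2×2}} ‖X‖_* subject to ΦX = (1, 0)ᵀ, where ΦX = (X₁₁ + X₂₂, X₁₂ − X₂₁ + X₂₂)ᵀ. Then X₀ = [[1,0],[0,0]] is the unique optimal solution of this problem, but X₀ is NOT a strong solution: there do not exist ε, κ > 0 such that ‖X‖_* − ‖X₀‖_* ≥ (κ/2)‖X − X₀‖_F² for all X with ΦX = (1,0)ᵀ and ‖X − X₀‖_F < ε. -/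
open Matrix Filter Set

/-- The spectral norm `‖X‖ = σ₁(X)`. -/
noncomputable def spectralNorm' {a b : ℕ} (X : Matrix (Fin a) (Fin b) ℝ) : ℝ :=
  ⨆ i, svals X i

lemma trace_eq_sum_eig {n : Type*} [Fintype n] [DecidableEq n] {A : Matrix n n ℝ}
    (hA : A.IsHermitian) : A.trace = ∑ i, hA.eigenvalues i := by
  simpa using hA.trace_eq_sum_eigenvalues

lemma nuclear_formula (X : Matrix (Fin 2) (Fin 2) ℝ) :
    nuclearNorm X = Real.sqrt
      (X 0 0 ^ 2 + X 0 1 ^ 2 + X 1 0 ^ 2 + X 1 1 ^ 2 + 2 * |X.det|) := by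
  set h := Matrix.isHermitian_mul_conjTranspose_self X with hh
  set μ := h.eigenvalues with hμ
  have h0 : ∀ i, 0 ≤ μ i := fun i =>
    (Matrix.posSemidef_self_mul_conjTranspose X).eigenvalues_nonneg i
  have hsum : nuclearNorm X = ∑ i, Real.sqrt (μ i) :=
    Fintype.sum_equiv (Fin.revPerm.trans (Tuple.sort μ)) _ _ (fun i => rfl)
  have htr : μ 0 + μ 1 = X 0 0 ^ 2 + X 0 1 ^ 2 + X 1 0 ^ 2 + X 1 1 ^ 2 := by
    have := trace_eq_sum_eig h
    rw [Fin.sum_univ_two] at this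
    rw [← this]
    simp [Matrix.trace, Matrix.mul_apply, Matrix.diag, Fin.sum_univ_two,
      Matrix.conjTranspose_apply]
    ring
  have hdet : μ 0 * μ 1 = X.det ^ 2 := by
    have h2 : (X * Xᴴ).det = μ 0 * μ 1 := by
      have := h.det_eq_prod_eigenvalues
      rw [Fin.prod_univ_two] at this
      exact_mod_cast this
    rw [← h2]
    rw [show Xᴴ = Xᵀ from by ext i j; simp [Matrix.conjTranspose_apply]]
    rw [Matrix.det_mul, Matrix.det_transpose]
    ring
  rw [hsum, Fin.sum_univ_two]
  rw [show X 0 0 ^ 2 + X 0 1 ^ 2 + X 1 0 ^ 2 + X 1 1 ^ 2 + 2 * |X.det|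
      = (Real.sqrt (μ 0) + Real.sqrt (μ 1)) ^ 2 from ?_]
  · rw [Real.sqrt_sq (by positivity)]
  · have hs : Real.sqrt (μ 0) * Real.sqrt (μ 1) = |X.det| := by
      rw [← Real.sqrt_mul (h0 0), hdet, Real.sqrt_sq_eq_abs]
    rw [add_sq, Real.sq_sqrt (h0 0), Real.sq_sqrt (h0 1), mul_assoc, hs]
    linarith [htr]

lemma frob_formula (A : Matrix (Fin 2) (Fin 2) ℝ) :
    frobNorm A = Real.sqrt (A 0 0 ^ 2 + A 0 1 ^ 2 + A 1 0 ^ 2 + A 1 1 ^ 2) := by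
  unfold frobNorm finner
  congr 1
  simp [Matrix.trace, Matrix.mul_apply, Matrix.diag, Fin.sum_univ_two, Matrix.transpose_apply]
  ring

lemma nuclear_X0 : nuclearNorm !![(1:ℝ), 0; 0, 0] = 1 := by
  rw [nuclear_formula]
  norm_num [Matrix.det_fin_two_of]


set_option maxHeartbeats 1000000 in
/-- **Example (A unique solution which is not a strong solution).**
For the problem `min ‖X‖_*` over `2 × 2` matrices subject to
`X₁₁ + X₂₂ = 1` and `X₁₂ − X₂₁ + X₂₂ = 0`, the matrix `X₀ = [[1,0],[0,0]]` is the
unique optimal solution, but it is not a strong solution. -/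
theorem unique_but_not_strong_2x2 :
    (∀ X : Matrix (Fin 2) (Fin 2) ℝ,
      X 0 0 + X 1 1 = 1 → X 0 1 - X 1 0 + X 1 1 = 0 → X ≠ !![(1:ℝ), 0; 0, 0] →
      nuclearNorm !![(1:ℝ), 0; 0, 0] < nuclearNorm X) ∧
    ¬ (∃ ε > (0:ℝ), ∃ κ > (0:ℝ), ∀ X : Matrix (Fin 2) (Fin 2) ℝ,
      X 0 0 + X 1 1 = 1 → X 0 1 - X 1 0 + X 1 1 = 0 →
      frobNorm (X - !![(1:ℝ), 0; 0, 0]) < ε →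
      κ / 2 * frobNorm (X - !![(1:ℝ), 0; 0, 0]) ^ 2 ≤
        nuclearNorm X - nuclearNorm !![(1:ℝ), 0; 0, 0]) := by
  constructor
  · intro X h1 h2 hne
    rw [nuclear_X0, nuclear_formula]
    set a := X 0 0; set b := X 0 1; set c := X 1 0; set d := X 1 1
    have hdb : d ≠ 0 ∨ b ≠ 0 := by
      by_contra hcon
      push_neg at hcon
      obtain ⟨hd0, hb0⟩ := hcon
      apply hne
      ext i j
      fin_cases i <;> fin_cases j <;>
        simp_all <;> linarith
    have hdet : X.det = a * d - b * c := Matrix.det_fin_two X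
    rw [show (1:ℝ) = Real.sqrt 1 from (Real.sqrt_one).symm]
    apply Real.sqrt_lt_sqrt (by norm_num)
    rw [hdet]
    have ha : a = 1 - d := by linarith
    have hc : c = b + d := by linarith
    have expand : a ^ 2 + b ^ 2 + c ^ 2 + d ^ 2 + 2 * (a * d - b * c) = 1 + d ^ 2 := by
      rw [ha, hc]; ring
    have key : 1 < a ^ 2 + b ^ 2 + c ^ 2 + d ^ 2 + 2 * |a * d - b * c| := by
      rcases abs_cases (a * d - b * c) with ⟨he, hge⟩ | ⟨he, hneg⟩
      · rw [he]
        by_contra hle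
        push_neg at hle
        have hd2 : d ^ 2 ≤ 0 := by linarith
        have hd0 : d = 0 := by
          have h' : d ^ 2 = 0 := le_antisymm hd2 (sq_nonneg d)
          exact pow_eq_zero_iff two_ne_zero |>.mp h'
        have hbb : a * d - b * c = -b ^ 2 := by rw [ha, hc, hd0]; ring
        have hb2 : b ^ 2 ≤ 0 := by linarith [hbb ▸ hge]
        have hb0 : b = 0 := by
          have h' : b ^ 2 = 0 := le_antisymm hb2 (sq_nonneg b)
          exact pow_eq_zero_iff two_ne_zero |>.mp h'
        rcases hdb with h | h <;> exact h (by assumption)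
      · rw [he]
        linarith [expand, sq_nonneg d]
    linarith
  · rintro ⟨ε, hε, κ, hκ, H⟩
    set t : ℝ := min (min (ε ^ 2 / 4) (κ / 8)) (1 / 4) with ht_def
    have ht0 : 0 < t := by positivity
    have ht4 : t ≤ 1 / 4 := min_le_right _ _
    have htε : t ≤ ε ^ 2 / 4 := le_trans (min_le_left _ _) (min_le_left _ _)
    have htκ : t ≤ κ / 8 := le_trans (min_le_left _ _) (min_le_right _ _)
    set s : ℝ := Real.sqrt t with hs_def
    have hs0 : 0 ≤ s := Real.sqrt_nonneg t
    have hs2 : s ^ 2 = t := Real.sq_sqrt ht0.le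
    have hs12 : s ≤ 1 / 2 := by
      rw [hs_def, show (1:ℝ)/2 = Real.sqrt (1/4) from by
        rw [show (1:ℝ)/4 = (1/2)^2 by norm_num, Real.sqrt_sq]; norm_num]
      exact Real.sqrt_le_sqrt ht4
    set X : Matrix (Fin 2) (Fin 2) ℝ := !![1 - t, s / 2; s / 2 + t, t] with hX
    have hXe : X 0 0 = 1 - t ∧ X 0 1 = s / 2 ∧ X 1 0 = s / 2 + t ∧ X 1 1 = t := by
      refine ⟨?_, ?_, ?_, ?_⟩ <;> simp [hX]
    obtain ⟨e00, e01, e10, e11⟩ := hXe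
    clear_value X s t
    have hc1 : X 0 0 + X 1 1 = 1 := by rw [e00, e11]; ring
    have hc2 : X 0 1 - X 1 0 + X 1 1 = 0 := by rw [e01, e10, e11]; ring
    -- Frobenius norm squared
    have hfrob : frobNorm (X - !![(1:ℝ), 0; 0, 0]) =
        Real.sqrt (t / 2 + s * t + 3 * t ^ 2) := by
      rw [frob_formula]
      congr 1
      simp only [Matrix.sub_apply, e00, e01, e10, e11]
      norm_num
      linear_combination hs2 / 2
    have hv0 : (0:ℝ) ≤ t / 2 + s * t + 3 * t ^ 2 := by positivity
    have hfrob_sq : frobNorm (X - !![(1:ℝ), 0; 0, 0]) ^ 2 = t / 2 + s * t + 3 * t ^ 2 := by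
      rw [hfrob, Real.sq_sqrt hv0]
    -- nuclear norm of X
    have hdetX : X.det = 3 / 4 * t - t ^ 2 - s * t / 2 := by
      rw [Matrix.det_fin_two, e00, e01, e10, e11]
      linear_combination -hs2 / 4
    have hdet_nonneg : 0 ≤ X.det := by
      rw [hdetX]
      nlinarith [mul_le_mul_of_nonneg_right hs12 ht0.le]
    have hnuc : nuclearNorm X = Real.sqrt (1 + t ^ 2) := by
      rw [nuclear_formula, abs_of_nonneg hdet_nonneg, hdetX, e00, e01, e10, e11]
      congr 1
      linear_combination hs2 / 2
    -- frobNorm < ε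
    have hfrob_lt : frobNorm (X - !![(1:ℝ), 0; 0, 0]) < ε := by
      rw [hfrob]
      have h2t : t / 2 + s * t + 3 * t ^ 2 < ε ^ 2 := by
        nlinarith [mul_le_mul_of_nonneg_right hs12 ht0.le]
      calc Real.sqrt (t / 2 + s * t + 3 * t ^ 2) < Real.sqrt (ε ^ 2) :=
            Real.sqrt_lt_sqrt hv0 h2t
        _ = ε := Real.sqrt_sq hε.le
    have := H X hc1 hc2 hfrob_lt
    rw [hfrob_sq, hnuc, nuclear_X0] at this
    have hroot : Real.sqrt (1 + t ^ 2) ≤ 1 + t ^ 2 / 2 := by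
      have hle : (1:ℝ) + t ^ 2 ≤ (1 + t ^ 2 / 2) ^ 2 := by nlinarith [sq_nonneg (t ^ 2)]
      calc Real.sqrt (1 + t ^ 2) ≤ Real.sqrt ((1 + t ^ 2 / 2) ^ 2) := Real.sqrt_le_sqrt hle
        _ = 1 + t ^ 2 / 2 := Real.sqrt_sq (by positivity)
    have hA : 0 ≤ κ / 2 * (s * t + 3 * t ^ 2) := by positivity
    have hexp : κ / 2 * (t / 2 + s * t + 3 * t ^ 2)
        = κ / 2 * (t / 2) + κ / 2 * (s * t + 3 * t ^ 2) := by ring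
    have hB : κ * t ≤ 2 * t ^ 2 := by nlinarith [hA, hroot, this, hexp]
    have hC : κ ≤ 2 * t := by
      have h2 : κ * t ≤ (2 * t) * t := by nlinarith [hB]
      exact le_of_mul_le_mul_right h2 ht0
    linarith
end
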